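/- (Tracking-error norm bound.) Let A be a (κ,γ)-strongly stable continuous linear map on a finite-dimensional real inner product space E. Let η > 0, L > 0, D > 0, and let (z_t)_{t≥1}, (x_t)_{t≥1} be sequences in E such that x_{t+1} = A x_t + (I − A) z_t for all t ≥ 1, ‖x_1‖ ≤ D, ‖z_t‖ ≤ D for all t, and ‖z_{t−τ} − z_t‖ ≤ η·τ·L·D for all t ≥ 1 and 1 ≤ τ ≤ t − 1. Then for every t ≥ 1, ‖x_t − z_t‖ ≤ 2·D·κ·(1 − γ)^{t−1} + 2·η·κ²·L·D/γ². -/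

import Mathlib

/-- A continuous linear map `A` is `(κ,γ)`-strongly stable if `A = H ∘ J ∘ H⁻¹` for some
invertible continuous linear map `H` and continuous linear map `J` with `‖J‖ ≤ 1 - γ` and
`‖H‖·‖H⁻¹‖ ≤ κ`. -/
def StronglyStable {E : Type*} [NormedAddCommGroup E] [InnerProductSpace ℝ E]
    (κ γ : ℝ) (A : E →L[ℝ] E) : Prop :=
  ∃ (H : E ≃L[ℝ] E) (J : E →L[ℝ] E),
    A = (H : E →L[ℝ] E).comp (J.comp (H.symm : E →L[ℝ] E)) ∧
      ‖J‖ ≤ 1 - γ ∧ ‖(H : E →L[ℝ] E)‖ * ‖(H.symm : E →L[ℝ] E)‖ ≤ κ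

section Aux

variable {E : Type*} [NormedAddCommGroup E] [InnerProductSpace ℝ E]

lemma geom_sum_aux {γ : ℝ} (hγ : 0 < γ) (hγ1 : γ ≤ 1) (n : ℕ) :
    ∑ j ∈ Finset.range n, ((j : ℝ) + 1) * (1 - γ) ^ j ≤ 1 / γ ^ 2 := by
  have h0 : (0:ℝ) ≤ 1 - γ := by linarith
  have h1 : (1:ℝ) - γ < 1 := by linarith
  have hn : ‖(1:ℝ) - γ‖ < 1 := by rw [Real.norm_eq_abs, abs_of_nonneg h0]; exact h1
  have hs1 := hasSum_coe_mul_geometric_of_norm_lt_one (𝕜 := ℝ) hn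
  have hs2 := hasSum_geometric_of_lt_one h0 h1
  have hs : HasSum (fun j : ℕ => ((j : ℝ) + 1) * (1 - γ) ^ j) (1 / γ ^ 2) := by
    have h := hs1.add hs2
    have hf : (fun j : ℕ => (j : ℝ) * (1 - γ) ^ j + (1 - γ) ^ j)
        = fun j : ℕ => ((j : ℝ) + 1) * (1 - γ) ^ j := by
      funext j; ring
    have hv : (1 - γ) / (1 - (1 - γ)) ^ 2 + (1 - (1 - γ))⁻¹ = 1 / γ ^ 2 := by
      rw [show (1:ℝ) - (1 - γ) = γ by ring]
      field_simp
      ring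
    rwa [hf, hv] at h
  refine le_trans ?_ (sum_le_hasSum (Finset.range n) (fun j _ => ?_) hs)
  · exact le_of_eq rfl
  · positivity

end Aux

/-- tracking-error norm bound
`‖x_t - z_t‖ ≤ 2Dκ(1-γ)^{t-1} + 2ηκ²LD/γ²`. -/
theorem tracking_error_norm_bound {E : Type*} [NormedAddCommGroup E] [InnerProductSpace ℝ E]
    [FiniteDimensional ℝ E] {κ γ η L D : ℝ} (hκ : 0 < κ) (hγ : 0 < γ) (hγ1 : γ ≤ 1)
    (hη : 0 < η) (hL : 0 < L) (hD : 0 < D)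
    {A : E →L[ℝ] E} (hA : StronglyStable κ γ A)
    (x z : ℕ → E)
    (hx : ∀ t : ℕ, 1 ≤ t → x (t + 1) = A (x t) + ((1 : E →L[ℝ] E) - A) (z t))
    (hx1 : ‖x 1‖ ≤ D) (hzbd : ∀ t : ℕ, 1 ≤ t → ‖z t‖ ≤ D)
    (hzdiff : ∀ t : ℕ, 1 ≤ t → ∀ τ : ℕ, 1 ≤ τ → τ ≤ t - 1 →
      ‖z (t - τ) - z t‖ ≤ η * τ * L * D) :
    ∀ t : ℕ, 1 ≤ t →
      ‖x t - z t‖ ≤ 2 * D * κ * (1 - γ) ^ (t - 1) + 2 * η * κ ^ 2 * L * D / γ ^ 2 := by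
  obtain ⟨H, J, hAeq, hJ, hHκ⟩ := hA
  have hγ0 : (0:ℝ) ≤ 1 - γ := by linarith
  -- A^k = H ∘ J^k ∘ H⁻¹
  have hApow : ∀ k : ℕ, ∀ v : E, (A ^ k) v = H ((J ^ k) (H.symm v)) := by
    intro k
    induction k with
    | zero => intro v; simp
    | succ k ih =>
      intro v
      rw [pow_succ', ContinuousLinearMap.mul_apply, ih, hAeq, pow_succ']
      simp [ContinuousLinearMap.mul_apply]
  have hJk : ∀ k : ℕ, ‖(J ^ k : E →L[ℝ] E)‖ ≤ (1 - γ) ^ k := by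
    intro k
    induction k with
    | zero => rw [pow_zero]; exact ContinuousLinearMap.norm_id_le
    | succ k ihk =>
      calc ‖(J ^ (k + 1) : E →L[ℝ] E)‖ = ‖(J ^ k * J : E →L[ℝ] E)‖ := by rw [pow_succ]
        _ ≤ ‖(J ^ k : E →L[ℝ] E)‖ * ‖J‖ := norm_mul_le _ _
        _ ≤ (1 - γ) ^ k * (1 - γ) := mul_le_mul ihk hJ (norm_nonneg _) (by positivity)
        _ = (1 - γ) ^ (k + 1) := by rw [pow_succ]
  -- ‖A^k‖ ≤ κ (1-γ)^k
  have hAk : ∀ k : ℕ, ‖(A ^ k : E →L[ℝ] E)‖ ≤ κ * (1 - γ) ^ k := by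
    intro k
    have heq : (A ^ k : E →L[ℝ] E) =
        (H : E →L[ℝ] E).comp ((J ^ k).comp (H.symm : E →L[ℝ] E)) := by
      ext v; simpa using hApow k v
    rw [heq]
    calc ‖(H : E →L[ℝ] E).comp ((J ^ k).comp (H.symm : E →L[ℝ] E))‖
        ≤ ‖(H : E →L[ℝ] E)‖ * ‖(J ^ k).comp (H.symm : E →L[ℝ] E)‖ :=
          ContinuousLinearMap.opNorm_comp_le _ _
      _ ≤ ‖(H : E →L[ℝ] E)‖ * (‖(J ^ k : E →L[ℝ] E)‖ * ‖(H.symm : E →L[ℝ] E)‖) :=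
          mul_le_mul_of_nonneg_left (ContinuousLinearMap.opNorm_comp_le _ _) (norm_nonneg _)
      _ = ‖(H : E →L[ℝ] E)‖ * ‖(H.symm : E →L[ℝ] E)‖ * ‖(J ^ k : E →L[ℝ] E)‖ := by ring
      _ ≤ κ * (1 - γ) ^ k :=
          mul_le_mul hHκ (hJk k) (norm_nonneg _) hκ.le
  -- ‖1 - A‖ ≤ 2κ
  have hIA : ‖((1 : E →L[ℝ] E) - A)‖ ≤ 2 * κ := by
    have heq : ((1 : E →L[ℝ] E) - A) =
        (H : E →L[ℝ] E).comp (((1 : E →L[ℝ] E) - J).comp (H.symm : E →L[ℝ] E)) := by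
      ext v; simp [hAeq]
    rw [heq]
    calc ‖(H : E →L[ℝ] E).comp (((1 : E →L[ℝ] E) - J).comp (H.symm : E →L[ℝ] E))‖
        ≤ ‖(H : E →L[ℝ] E)‖ * ‖(((1 : E →L[ℝ] E) - J).comp (H.symm : E →L[ℝ] E))‖ :=
          ContinuousLinearMap.opNorm_comp_le _ _
      _ ≤ ‖(H : E →L[ℝ] E)‖ * (‖((1 : E →L[ℝ] E) - J)‖ * ‖(H.symm : E →L[ℝ] E)‖) :=
          mul_le_mul_of_nonneg_left (ContinuousLinearMap.opNorm_comp_le _ _) (norm_nonneg _)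
      _ = ‖(H : E →L[ℝ] E)‖ * ‖(H.symm : E →L[ℝ] E)‖ * ‖((1 : E →L[ℝ] E) - J)‖ := by ring
      _ ≤ κ * 2 := by
          have h1 : ‖((1 : E →L[ℝ] E) - J)‖ ≤ 2 := by
            calc ‖((1 : E →L[ℝ] E) - J)‖ ≤ ‖(1 : E →L[ℝ] E)‖ + ‖J‖ := norm_sub_le _ _
              _ ≤ 1 + (1 - γ) := by
                  gcongr
                  · exact ContinuousLinearMap.norm_id_le
              _ ≤ 2 := by linarith
          exact mul_le_mul hHκ h1 (norm_nonneg _) hκ.le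
      _ = 2 * κ := by ring
  -- unrolled dynamics
  have hform : ∀ n : ℕ, x (n + 1) = (A ^ n) (x 1) +
      ∑ i ∈ Finset.range n, (A ^ (n - 1 - i)) (((1 : E →L[ℝ] E) - A) (z (i + 1))) := by
    intro n
    induction n with
    | zero => simp
    | succ n ih =>
      rw [hx (n + 1) (by omega), ih, Finset.sum_range_succ]
      rw [map_add, map_sum]
      have h1 : A ((A ^ n) (x 1)) = (A ^ (n + 1)) (x 1) := by
        rw [pow_succ', ContinuousLinearMap.mul_apply]
      have h2 : ∀ i ∈ Finset.range n,
          A ((A ^ (n - 1 - i)) (((1 : E →L[ℝ] E) - A) (z (i + 1)))) =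
          (A ^ (n + 1 - 1 - i)) (((1 : E →L[ℝ] E) - A) (z (i + 1))) := by
        intro i hi
        rw [Finset.mem_range] at hi
        have : n + 1 - 1 - i = (n - 1 - i) + 1 := by omega
        rw [this, pow_succ', ContinuousLinearMap.mul_apply]
      rw [Finset.sum_congr rfl h2, h1]
      have h3 : n + 1 - 1 - n = 0 := by omega
      rw [h3, pow_zero]
      simp only [ContinuousLinearMap.one_apply]
      abel
  -- telescoping identity
  have htel : ∀ n : ℕ, ∀ v : E,
      ∑ i ∈ Finset.range n, (A ^ (n - 1 - i)) (((1 : E →L[ℝ] E) - A) v) = v - (A ^ n) v := by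
    intro n
    induction n with
    | zero => intro v; simp
    | succ n ih =>
      intro v
      rw [Finset.sum_range_succ]
      have h2 : ∀ i ∈ Finset.range n,
          (A ^ (n + 1 - 1 - i)) (((1 : E →L[ℝ] E) - A) v) =
          A ((A ^ (n - 1 - i)) (((1 : E →L[ℝ] E) - A) v)) := by
        intro i hi
        rw [Finset.mem_range] at hi
        have : n + 1 - 1 - i = (n - 1 - i) + 1 := by omega
        rw [this, pow_succ', ContinuousLinearMap.mul_apply]
      rw [Finset.sum_congr rfl h2, ← map_sum, ih v]
      have h3 : n + 1 - 1 - n = 0 := by omega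
      rw [h3, pow_zero]
      have h4 : A (v - (A ^ n) v) = A v - (A ^ (n + 1)) v := by
        rw [map_sub, pow_succ', ContinuousLinearMap.mul_apply]
      rw [h4]
      simp only [ContinuousLinearMap.sub_apply, ContinuousLinearMap.one_apply]
      abel
  intro t ht
  obtain ⟨n, rfl⟩ : ∃ n, t = n + 1 := ⟨t - 1, by omega⟩
  -- key decomposition
  have key : x (n + 1) - z (n + 1) = (A ^ n) (x 1 - z (n + 1)) +
      ∑ i ∈ Finset.range n, (A ^ (n - 1 - i)) (((1 : E →L[ℝ] E) - A) (z (i + 1) - z (n + 1))) := by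
    have e1 : ∀ i : ℕ,
        (A ^ (n - 1 - i)) (((1 : E →L[ℝ] E) - A) (z (i + 1) - z (n + 1))) =
        (A ^ (n - 1 - i)) (((1 : E →L[ℝ] E) - A) (z (i + 1))) -
        (A ^ (n - 1 - i)) (((1 : E →L[ℝ] E) - A) (z (n + 1))) := by
      intro i; rw [map_sub, map_sub]
    simp only [e1, map_sub, Finset.sum_sub_distrib]
    rw [htel n (z (n + 1)), hform n]
    abel
  rw [key]
  have hτbd : ∀ i ∈ Finset.range n, ‖z (i + 1) - z (n + 1)‖ ≤ η * (n - i : ℕ) * L * D := by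
    intro i hi
    rw [Finset.mem_range] at hi
    have h := hzdiff (n + 1) (by omega) (n - i) (by omega) (by omega)
    have : n + 1 - (n - i) = i + 1 := by omega
    rwa [this] at h
  have term_bd : ∀ i ∈ Finset.range n,
      ‖(A ^ (n - 1 - i)) (((1 : E →L[ℝ] E) - A) (z (i + 1) - z (n + 1)))‖ ≤
      (2 * η * κ ^ 2 * L * D) * (((n - i : ℕ) : ℝ) * (1 - γ) ^ (n - 1 - i)) := by
    intro i hi
    calc ‖(A ^ (n - 1 - i)) (((1 : E →L[ℝ] E) - A) (z (i + 1) - z (n + 1)))‖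
        ≤ ‖(A ^ (n - 1 - i) : E →L[ℝ] E)‖ * ‖((1 : E →L[ℝ] E) - A) (z (i + 1) - z (n + 1))‖ :=
          ContinuousLinearMap.le_opNorm _ _
      _ ≤ (κ * (1 - γ) ^ (n - 1 - i)) * ((2 * κ) * (η * (n - i : ℕ) * L * D)) := by
          refine mul_le_mul (hAk _) ?_ (norm_nonneg _) (by positivity)
          calc ‖((1 : E →L[ℝ] E) - A) (z (i + 1) - z (n + 1))‖
              ≤ ‖((1 : E →L[ℝ] E) - A)‖ * ‖z (i + 1) - z (n + 1)‖ :=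
                ContinuousLinearMap.le_opNorm _ _
            _ ≤ (2 * κ) * (η * (n - i : ℕ) * L * D) :=
                mul_le_mul hIA (hτbd i hi) (norm_nonneg _) (by positivity)
      _ = (2 * η * κ ^ 2 * L * D) * (((n - i : ℕ) : ℝ) * (1 - γ) ^ (n - 1 - i)) := by ring
  have sum_eq : ∑ i ∈ Finset.range n, (((n - i : ℕ) : ℝ) * (1 - γ) ^ (n - 1 - i)) =
      ∑ j ∈ Finset.range n, ((j : ℝ) + 1) * (1 - γ) ^ j := by
    rw [← Finset.sum_range_reflect (fun j => ((j : ℝ) + 1) * (1 - γ) ^ j) n]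
    refine Finset.sum_congr rfl (fun i hi => ?_)
    rw [Finset.mem_range] at hi
    have h1 : ((n - i : ℕ) : ℝ) = ((n - 1 - i : ℕ) : ℝ) + 1 := by
      have : (n - i : ℕ) = (n - 1 - i : ℕ) + 1 := by omega
      rw [this]; push_cast; ring
    rw [h1]
  calc ‖(A ^ n) (x 1 - z (n + 1)) +
        ∑ i ∈ Finset.range n, (A ^ (n - 1 - i)) (((1 : E →L[ℝ] E) - A) (z (i + 1) - z (n + 1)))‖
      ≤ ‖(A ^ n) (x 1 - z (n + 1))‖ +
        ‖∑ i ∈ Finset.range n, (A ^ (n - 1 - i)) (((1 : E →L[ℝ] E) - A) (z (i + 1) - z (n + 1)))‖ :=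
        norm_add_le _ _
    _ ≤ (κ * (1 - γ) ^ n) * (2 * D) +
        (2 * η * κ ^ 2 * L * D) * ∑ j ∈ Finset.range n, ((j : ℝ) + 1) * (1 - γ) ^ j := by
        gcongr ?_ + ?_
        · calc ‖(A ^ n) (x 1 - z (n + 1))‖
              ≤ ‖(A ^ n : E →L[ℝ] E)‖ * ‖x 1 - z (n + 1)‖ := ContinuousLinearMap.le_opNorm _ _
            _ ≤ (κ * (1 - γ) ^ n) * (2 * D) := by
                refine mul_le_mul (hAk n) ?_ (norm_nonneg _) (by positivity)
                calc ‖x 1 - z (n + 1)‖ ≤ ‖x 1‖ + ‖z (n + 1)‖ := norm_sub_le _ _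
                  _ ≤ D + D := add_le_add hx1 (hzbd (n + 1) (by omega))
                  _ = 2 * D := by ring
        · calc ‖∑ i ∈ Finset.range n,
                (A ^ (n - 1 - i)) (((1 : E →L[ℝ] E) - A) (z (i + 1) - z (n + 1)))‖
              ≤ ∑ i ∈ Finset.range n,
                ‖(A ^ (n - 1 - i)) (((1 : E →L[ℝ] E) - A) (z (i + 1) - z (n + 1)))‖ :=
                norm_sum_le _ _
            _ ≤ ∑ i ∈ Finset.range n,
                (2 * η * κ ^ 2 * L * D) * (((n - i : ℕ) : ℝ) * (1 - γ) ^ (n - 1 - i)) :=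
                Finset.sum_le_sum term_bd
            _ = (2 * η * κ ^ 2 * L * D) *
                ∑ j ∈ Finset.range n, ((j : ℝ) + 1) * (1 - γ) ^ j := by
                rw [← Finset.mul_sum, sum_eq]
    _ ≤ 2 * D * κ * (1 - γ) ^ (n + 1 - 1) + 2 * η * κ ^ 2 * L * D / γ ^ 2 := by
        have hs := geom_sum_aux hγ hγ1 n
        have h1 : (κ * (1 - γ) ^ n) * (2 * D) = 2 * D * κ * (1 - γ) ^ (n + 1 - 1) := by
          simp; ring
        rw [h1]
        gcongr
        calc (2 * η * κ ^ 2 * L * D) * ∑ j ∈ Finset.range n, ((j : ℝ) + 1) * (1 - γ) ^ j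
            ≤ (2 * η * κ ^ 2 * L * D) * (1 / γ ^ 2) := by
              refine mul_le_mul_of_nonneg_left hs (by positivity)
          _ = 2 * η * κ ^ 2 * L * D / γ ^ 2 := by ring
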